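/- arXiv:1709.06707 — 5 statements merged into one kernel-verified Lean document; each statement's English description precedes it below -/
import Mathlib

section
/- Let f and g be bounded analytic functions on the complement Ω of a compact set in the Riemann sphere containing ∞, with |f(z)| + |g(z)| ≤ 1 on Ω, f(∞) ∈ (0,1), and g having a zero of order ℓ ≥ 1 at ∞ with leading Laurent coefficient a_ℓ ≠ 0. Then there exists ε > 0 such that h(z) = f(z) + ε·conj(a_ℓ)·z^ℓ·g(z) satisfies ‖h‖_∞ ≤ 1 and h(∞) = f(∞) + ε|a_ℓ|^2 > f(∞). -/
open Filter Bornology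

/-- (Variational step in Fisher's argument.)  Let `f, g` be bounded analytic
functions on the complement `Ω = ℂ ∖ 𝔢` of a compact set `𝔢` (analytic at `∞` as well), with
`|f(z)| + |g(z)| ≤ 1` on `Ω`, `f(∞) = c ∈ (0,1)`, and `g` having a zero of order `ℓ ≥ 1` at `∞`
with leading Laurent coefficient `a ≠ 0` (so `z^ℓ g(z) → a` at `∞`).  Then there is `ε > 0` such
that `h(z) = f(z) + ε · conj(a) · z^ℓ · g(z)` satisfies `‖h‖_∞ ≤ 1` and
`h(∞) = f(∞) + ε |a|² > f(∞)`. -/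
theorem fisher_variational_step (e : Set ℂ) (hcomp : IsCompact e)
    (f g : ℂ → ℂ)
    (hf : DifferentiableOn ℂ f eᶜ) (hg : DifferentiableOn ℂ g eᶜ)
    (hfg : ∀ z ∉ e, ‖f z‖ + ‖g z‖ ≤ 1)
    (c : ℝ) (hc0 : 0 < c) (hc1 : c < 1)
    (hfinf : Tendsto f (cobounded ℂ) (nhds ((c : ℂ))))
    (ℓ : ℕ) (hℓ : 1 ≤ ℓ) (a : ℂ) (ha : a ≠ 0)
    (hginf : Tendsto (fun z => z ^ ℓ * g z) (cobounded ℂ) (nhds a)) :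
    ∃ ε : ℝ, 0 < ε ∧
      (∀ z ∉ e, ‖f z + (ε : ℂ) * (starRingEnd ℂ) a * z ^ ℓ * g z‖ ≤ 1) ∧
      Tendsto (fun z => f z + (ε : ℂ) * (starRingEnd ℂ) a * z ^ ℓ * g z) (cobounded ℂ)
        (nhds ((c + ε * ‖a‖ ^ 2 : ℝ) : ℂ)) ∧
      c < c + ε * ‖a‖ ^ 2 := by
  set A := ‖a‖ with hAdef
  have hA0 : 0 < A := norm_pos_iff.mpr ha
  -- eventual bound on |f|
  have hev1 : ∀ᶠ z in cobounded ℂ, ‖f z‖ < (1 + c) / 2 := by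
    have h1 : Tendsto (fun z => ‖f z‖) (cobounded ℂ) (nhds c) := by
      have := hfinf.norm
      simpa [abs_of_pos hc0] using this
    exact h1.eventually_lt_const (by linarith)
  -- eventual bound on |z^ℓ g z|
  have hev2 : ∀ᶠ z in cobounded ℂ, ‖z ^ ℓ * g z‖ < A + 1 := by
    have h2 : Tendsto (fun z => ‖z ^ ℓ * g z‖) (cobounded ℂ) (nhds A) :=
      hginf.norm
    exact h2.eventually_lt_const (by linarith)
  -- extract a radius R
  obtain ⟨R, hR⟩ : ∃ R : ℝ, ∀ z : ℂ, R < ‖z‖ →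
      ‖f z‖ < (1 + c) / 2 ∧ ‖z ^ ℓ * g z‖ < A + 1 := by
    have hmem : {z : ℂ | ‖f z‖ < (1 + c) / 2 ∧
        ‖z ^ ℓ * g z‖ < A + 1} ∈ cobounded ℂ := hev1.and hev2
    have hb : IsBounded {z : ℂ | ‖f z‖ < (1 + c) / 2 ∧
        ‖z ^ ℓ * g z‖ < A + 1}ᶜ := by
      rw [isBounded_def]
      simpa using hmem
    obtain ⟨r, hr⟩ := (Metric.isBounded_iff_subset_closedBall 0).1 hb
    refine ⟨r, fun z hz => ?_⟩
    by_contra hcon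
    have := hr hcon
    simp only [Metric.mem_closedBall, Complex.dist_eq, sub_zero] at this
    exact absurd (lt_of_lt_of_le hz this) (lt_irrefl r)
  set M : ℝ := max R 1 with hMdef
  have hM1 : (1 : ℝ) ≤ M := le_max_right _ _
  have hM0 : 0 < M := lt_of_lt_of_le one_pos hM1
  have hMpow : 0 < M ^ ℓ := pow_pos hM0 ℓ
  set ε : ℝ := min ((1 - c) / (2 * (A * (A + 1)))) (1 / (A * M ^ ℓ)) with hεdef
  have hε0 : 0 < ε := by
    apply lt_min
    · apply div_pos (by linarith) (by positivity)
    · positivity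
  refine ⟨ε, hε0, ?_, ?_, ?_⟩
  · intro z hz
    have key : ‖(ε : ℂ) * (starRingEnd ℂ) a * z ^ ℓ * g z‖
        = ε * A * ‖z ^ ℓ * g z‖ := by
      simp only [norm_mul, Complex.norm_real, Complex.norm_conj, Real.norm_eq_abs, abs_of_pos hε0, ← hAdef]
      ring
    rcases le_or_gt (‖z‖) M with hzM | hzM
    · -- bounded region: use |f| + |g| ≤ 1
      have hbound : ‖z ^ ℓ * g z‖ ≤ M ^ ℓ * ‖g z‖ := by
        rw [norm_mul, norm_pow]
        have : ‖z‖ ^ ℓ ≤ M ^ ℓ :=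
          pow_le_pow_left₀ (norm_nonneg z) hzM ℓ
        exact mul_le_mul_of_nonneg_right this (norm_nonneg _)
      have hεle : ε * (A * M ^ ℓ) ≤ 1 := by
        have : ε ≤ 1 / (A * M ^ ℓ) := min_le_right _ _
        calc ε * (A * M ^ ℓ) ≤ (1 / (A * M ^ ℓ)) * (A * M ^ ℓ) := by
              apply mul_le_mul_of_nonneg_right this (by positivity)
          _ = 1 := by field_simp
      calc ‖f z + (ε : ℂ) * (starRingEnd ℂ) a * z ^ ℓ * g z‖
          ≤ ‖f z‖ + ‖(ε : ℂ) * (starRingEnd ℂ) a * z ^ ℓ * g z‖ :=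
            norm_add_le _ _
        _ ≤ ‖f z‖ + ε * A * (M ^ ℓ * ‖g z‖) := by
            rw [key]
            have h' : ε * A * ‖z ^ ℓ * g z‖
                ≤ ε * A * (M ^ ℓ * ‖g z‖) :=
              mul_le_mul_of_nonneg_left hbound (by positivity)
            linarith
        _ ≤ ‖f z‖ + ‖g z‖ := by
            have : ε * A * (M ^ ℓ * ‖g z‖)
                = (ε * (A * M ^ ℓ)) * ‖g z‖ := by ring
            rw [this]
            have := mul_le_mul_of_nonneg_right hεle (norm_nonneg (g z))
            linarith [this]
        _ ≤ 1 := hfg z hz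
    · -- unbounded region: use eventual bounds
      have hzR : R < ‖z‖ := lt_of_le_of_lt (le_max_left R 1) hzM
      obtain ⟨hf', hg'⟩ := hR z hzR
      have hεle : ε * (A * (A + 1)) ≤ (1 - c) / 2 := by
        have h1 : ε ≤ (1 - c) / (2 * (A * (A + 1))) := min_le_left _ _
        calc ε * (A * (A + 1)) ≤ ((1 - c) / (2 * (A * (A + 1)))) * (A * (A + 1)) :=
              mul_le_mul_of_nonneg_right h1 (by positivity)
          _ = (1 - c) / 2 := by field_simp
      calc ‖f z + (ε : ℂ) * (starRingEnd ℂ) a * z ^ ℓ * g z‖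
          ≤ ‖f z‖ + ‖(ε : ℂ) * (starRingEnd ℂ) a * z ^ ℓ * g z‖ :=
            norm_add_le _ _
        _ ≤ (1 + c) / 2 + ε * A * (A + 1) := by
            rw [key]
            have := mul_le_mul_of_nonneg_left hg'.le (by positivity : (0:ℝ) ≤ ε * A)
            linarith
        _ ≤ (1 + c) / 2 + (1 - c) / 2 := by
            have : ε * A * (A + 1) = ε * (A * (A + 1)) := by ring
            linarith [hεle, this ▸ le_refl (ε * A * (A + 1))]
        _ = 1 := by ring
  · have hlim : Tendsto (fun z => f z + (ε : ℂ) * (starRingEnd ℂ) a * z ^ ℓ * g z)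
        (cobounded ℂ) (nhds ((c : ℂ) + (ε : ℂ) * (starRingEnd ℂ) a * a)) := by
      have h2 : Tendsto (fun z => (ε : ℂ) * (starRingEnd ℂ) a * z ^ ℓ * g z)
          (cobounded ℂ) (nhds ((ε : ℂ) * (starRingEnd ℂ) a * a)) := by
        have := hginf.const_mul ((ε : ℂ) * (starRingEnd ℂ) a)
        simpa [mul_assoc] using this
      exact hfinf.add h2
    have heq : ((c + ε * ‖a‖ ^ 2 : ℝ) : ℂ)
        = (c : ℂ) + (ε : ℂ) * (starRingEnd ℂ) a * a := by
      rw [mul_assoc, mul_comm ((starRingEnd ℂ) a), Complex.mul_conj, ← Complex.sq_norm]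
      push_cast
      ring
    rw [heq]
    exact hlim
  · have hpos : 0 < ε * A ^ 2 := by positivity
    linarith
end

section
/- Let 𝔢 be a regular Parreau–Widom set. The map χ ↦ Q_χ(∞) from the character group π₁(Ω)* to (0,1] is upper semicontinuous: if χ_j → χ then limsup_j Q_{χ_j}(∞) ≤ Q_χ(∞). -/
open Metric Set

/-- A bounded analytic `χ`-character-automorphic function on the unit disc (the universal
cover of `Ω`, with `0` lying over `∞`), relative to the action `T` of the deck group `Γ`. -/
def IsHinf {Γ : Type*} [Group Γ] (T : Γ → ℂ → ℂ) (χ : Γ →* Circle) (h : ℂ → ℂ) : Prop :=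
  DifferentiableOn ℂ h (ball (0 : ℂ) 1) ∧
  (∃ C : ℝ, ∀ z ∈ ball (0 : ℂ) 1, ‖h z‖ ≤ C) ∧
  (∀ γ : Γ, ∀ z ∈ ball (0 : ℂ) 1, h (T γ z) = (χ γ : ℂ) * h z)

/-- `Q` is a dual Widom maximizer for the character `χ`. -/
def IsDualWidomMaximizer {Γ : Type*} [Group Γ] (T : Γ → ℂ → ℂ) (χ : Γ →* Circle)
    (Q : ℂ → ℂ) : Prop :=
  IsHinf T χ Q ∧ (∀ z ∈ ball (0 : ℂ) 1, ‖Q z‖ ≤ 1) ∧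
  (Q 0).im = 0 ∧ 0 < (Q 0).re ∧
  ∀ g : ℂ → ℂ, IsHinf T χ g → (∀ z ∈ ball (0 : ℂ) 1, ‖g z‖ ≤ 1) →
    (g 0).im = 0 → 0 < (g 0).re → (g 0).re ≤ (Q 0).re

/-- The character group `π₁(Ω)* = Γ →* Circle` carries the topology of pointwise
convergence (induced from the product topology). -/
noncomputable instance charGroupTopology (Γ : Type*) [Group Γ] :
    TopologicalSpace (Γ →* Circle) :=
  TopologicalSpace.induced (fun χ (γ : Γ) => χ γ) inferInstance

section Aux

open Filter Topology

lemma schwarzBound {ι : Type*} (F : ι → ℂ → ℂ)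
    (hF : ∀ i, DifferentiableOn ℂ (F i) (ball (0:ℂ) 1))
    (hb : ∀ i, ∀ z ∈ ball (0:ℂ) 1, ‖F i z‖ ≤ 1)
    {x₀ x : ℂ} {δ : ℝ} (hδ : 0 < δ) (hball : ball x₀ δ ⊆ ball (0:ℂ) 1)
    (hx : x ∈ ball x₀ δ) (i : ι) :
    dist (F i x) (F i x₀) ≤ 3 / δ * dist x x₀ := by
  have hx₀ : x₀ ∈ ball (0:ℂ) 1 := hball (mem_ball_self hδ)
  refine Complex.dist_le_div_mul_dist_of_mapsTo_ball ((hF i).mono hball) ?_ hx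
  intro w hw
  have h1 : ‖F i w‖ ≤ 1 := hb i w (hball hw)
  have h2 : ‖F i x₀‖ ≤ 1 := hb i x₀ hx₀
  have h3 : dist (F i w) (F i x₀) ≤ 2 := by
    calc dist (F i w) (F i x₀) ≤ ‖F i w‖ + ‖F i x₀‖ := dist_le_norm_add_norm _ _
    _ ≤ 2 := by linarith
  exact mem_closedBall.mpr (le_trans h3 (by norm_num : (2:ℝ) ≤ 3))

lemma equicontOn {ι : Type*} (F : ι → ℂ → ℂ)
    (hF : ∀ i, DifferentiableOn ℂ (F i) (ball (0:ℂ) 1))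
    (hb : ∀ i, ∀ z ∈ ball (0:ℂ) 1, ‖F i z‖ ≤ 1)
    {K : Set ℂ} {δ : ℝ} (hδ : 0 < δ)
    (hballs : ∀ x ∈ K, ball x δ ⊆ ball (0:ℂ) 1) :
    EquicontinuousOn F K := by
  intro x hx
  intro Uent hUent
  obtain ⟨ε, hε, hεU⟩ := mem_uniformity_dist.mp hUent
  have hδ' : 0 < min δ (ε * δ / 6) := lt_min hδ (by positivity)
  have hmem : ball x (min δ (ε * δ / 6)) ∈ nhdsWithin x K :=
    mem_nhdsWithin_of_mem_nhds (ball_mem_nhds x hδ')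
  filter_upwards [hmem] with z hz i
  have hz' : z ∈ ball x δ := mem_ball.mpr (lt_of_lt_of_le (mem_ball.mp hz) (min_le_left _ _))
  have hS := schwarzBound F hF hb hδ (hballs x hx) hz' i
  have hd : dist z x < ε * δ / 6 := lt_of_lt_of_le (mem_ball.mp hz) (min_le_right _ _)
  have h2 : 3 / δ * dist z x < 3 / δ * (ε * δ / 6) :=
    mul_lt_mul_of_pos_left hd (by positivity)
  have h3 : 3 / δ * (ε * δ / 6) = ε / 2 := by field_simp; ring
  apply hεU
  have : dist (F i z) (F i x) < ε := by
    calc dist (F i z) (F i x) ≤ 3 / δ * dist z x := hS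
    _ < 3 / δ * (ε * δ / 6) := h2
    _ = ε / 2 := h3
    _ < ε := by linarith
  simpa [dist_comm] using this

lemma limit_differentiableOn {ι : Type*} (F : ι → ℂ → ℂ) (p : Filter ι) [p.NeBot]
    (hF : ∀ i, DifferentiableOn ℂ (F i) (ball (0:ℂ) 1))
    (hb : ∀ i, ∀ z ∈ ball (0:ℂ) 1, ‖F i z‖ ≤ 1)
    (h : ℂ → ℂ)
    (hp : ∀ z ∈ ball (0:ℂ) 1, Tendsto (fun i => F i z) p (𝓝 (h z))) :
    DifferentiableOn ℂ h (ball (0:ℂ) 1) := by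
  have hTLU : TendstoLocallyUniformlyOn F h p (ball (0:ℂ) 1) := by
    rw [tendstoLocallyUniformlyOn_iff_forall_isCompact isOpen_ball]
    intro K hKs hKc
    obtain ⟨δ, hδ, hthick⟩ := hKc.exists_thickening_subset_open isOpen_ball hKs
    have hballs : ∀ x ∈ K, ball x δ ⊆ ball (0:ℂ) 1 := fun x hx =>
      (ball_subset_thickening hx δ).trans hthick
    have heq : EquicontinuousOn F K := equicontOn F hF hb hδ hballs
    haveI : CompactSpace K := isCompact_iff_compactSpace.mp hKc
    have hGeq : Equicontinuous (K.restrict ∘ F) := (equicontinuous_restrict_iff F).mpr heq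
    have hpt : Tendsto (K.restrict ∘ F) p (𝓝 (K.restrict h)) :=
      tendsto_pi_nhds.mpr fun z => hp z (hKs z.2)
    have huf := (hGeq.tendsto_uniformFun_iff_pi p (K.restrict h)).mpr hpt
    rw [UniformFun.tendsto_iff_tendstoUniformly] at huf
    rw [tendstoUniformlyOn_iff_tendstoUniformly_comp_coe]
    exact huf
  exact hTLU.differentiableOn (Eventually.of_forall hF) isOpen_ball

end Aux

open Filter Topology

/-- Lemma 3.3.  Let `𝔢` be a regular Parreau–Widom set (PW encoded via
Widom's theorem on the disc model of the universal cover of `Ω`, deck group `Γ`).  The map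
`χ ↦ Q_χ(∞)` from the character group `π₁(Ω)*` to `(0,1]` is upper semicontinuous. -/

theorem dualWidomMaximizer_upperSemicontinuous {Γ : Type*} [Group Γ]
    (T : Γ → ℂ → ℂ)
    (hT1 : ∀ z, T 1 z = z)
    (hTmul : ∀ γ δ : Γ, ∀ z, T (γ * δ) z = T γ (T δ z))
    (hTmaps : ∀ γ : Γ, MapsTo (T γ) (ball (0 : ℂ) 1) (ball (0 : ℂ) 1))
    (hTanal : ∀ γ : Γ, DifferentiableOn ℂ (T γ) (ball (0 : ℂ) 1))
    (hPW : ∀ χ : Γ →* Circle, ∃ h : ℂ → ℂ, IsHinf T χ h ∧ h 0 ≠ 0)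
    (Q : (Γ →* Circle) → ℂ → ℂ)
    (hQ : ∀ χ : Γ →* Circle, IsDualWidomMaximizer T χ (Q χ))
    (hrange : ∀ χ : Γ →* Circle, (Q χ 0).re ∈ Set.Ioc (0 : ℝ) 1) :
    UpperSemicontinuous (fun χ : Γ →* Circle => (Q χ 0).re) := by
  classical
  intro χ y hy
  by_contra hcon
  rw [Filter.not_eventually] at hcon
  have hne : (𝓝 χ ⊓ 𝓟 {χ' | ¬ (Q χ' 0).re < y}).NeBot := frequently_iff_neBot.mp hcon
  set U : Ultrafilter (Γ →* Circle) :=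
    Ultrafilter.of (𝓝 χ ⊓ 𝓟 {χ' | ¬ (Q χ' 0).re < y}) with hUdef
  have hUle : ↑U ≤ 𝓝 χ ⊓ 𝓟 {χ' | ¬ (Q χ' 0).re < y} := Ultrafilter.of_le _
  have hUn : ↑U ≤ 𝓝 χ := hUle.trans inf_le_left
  have hUp : ∀ᶠ χ' in (↑U : Filter _), y ≤ (Q χ' 0).re := by
    have hmem : {χ' | ¬ (Q χ' 0).re < y} ∈ (↑U : Filter _) :=
      (hUle.trans inf_le_right) (mem_principal_self _)
    filter_upwards [hmem] with χ' hχ'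
    exact not_lt.mp hχ'
  -- pointwise ultrafilter limits exist
  have hlim : ∀ z, z ∈ ball (0:ℂ) 1 → ∃ c : ℂ, Tendsto (fun χ' => Q χ' z) ↑U (𝓝 c) := by
    intro z hz
    have hmem : ∀ χ', Q χ' z ∈ closedBall (0:ℂ) 1 := fun χ' => by
      simpa [Complex.dist_eq] using (hQ χ').2.1 z hz
    obtain ⟨c, -, hc⟩ := (isCompact_closedBall (0:ℂ) 1).ultrafilter_le_nhds
      (U.map (fun χ' => Q χ' z))
      (by rw [Ultrafilter.coe_map, le_principal_iff, mem_map]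
          exact univ_mem' hmem)
    exact ⟨c, by rwa [Ultrafilter.coe_map] at hc⟩
  choose g hg using hlim
  set h : ℂ → ℂ := fun z => if hz : z ∈ ball (0:ℂ) 1 then g z hz else 0 with hhdef
  have hh : ∀ z, ∀ hz : z ∈ ball (0:ℂ) 1, Tendsto (fun χ' => Q χ' z) ↑U (𝓝 (h z)) := by
    intro z hz
    simpa only [hhdef, dif_pos hz] using hg z hz
  have hhb : ∀ z ∈ ball (0:ℂ) 1, ‖h z‖ ≤ 1 := by
    intro z hz
    have h1 : Tendsto (fun χ' => ‖Q χ' z‖) ↑U (𝓝 (‖h z‖)) :=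
      (continuous_norm.tendsto _).comp (hh z hz)
    exact le_of_tendsto h1 (Eventually.of_forall fun χ' => (hQ χ').2.1 z hz)
  have hhe : ∀ γ : Γ, ∀ z ∈ ball (0:ℂ) 1, h (T γ z) = (χ γ : ℂ) * h z := by
    intro γ z hz
    have hz' : T γ z ∈ ball (0:ℂ) 1 := hTmaps γ hz
    have h1 : Tendsto (fun χ' => Q χ' (T γ z)) ↑U (𝓝 (h (T γ z))) := hh _ hz'
    have hc : Continuous fun χ' : Γ →* Circle => ((χ' γ : Circle) : ℂ) := by
      have h0 : Continuous fun χ' : Γ →* Circle => (fun γ : Γ => χ' γ) :=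
        continuous_induced_dom
      exact continuous_subtype_val.comp ((continuous_apply γ).comp h0)
    have hev : Tendsto (fun χ' : Γ →* Circle => ((χ' γ : Circle) : ℂ)) ↑U
        (𝓝 ((χ γ : Circle) : ℂ)) := (hc.tendsto χ).mono_left hUn
    have h2 : Tendsto (fun χ' => ((χ' γ : Circle) : ℂ) * Q χ' z) ↑U
        (𝓝 (((χ γ : Circle) : ℂ) * h z)) := hev.mul (hh z hz)
    have h3 : (fun χ' : Γ →* Circle => Q χ' (T γ z))
        = fun χ' => ((χ' γ : Circle) : ℂ) * Q χ' z :=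
      funext fun χ' => (hQ χ').1.2.2 γ z hz
    rw [h3] at h1
    exact tendsto_nhds_unique h1 h2
  have h0mem : (0:ℂ) ∈ ball (0:ℂ) 1 := mem_ball_self one_pos
  have h0 : Tendsto (fun χ' => Q χ' 0) ↑U (𝓝 (h 0)) := hh 0 h0mem
  have him : (h 0).im = 0 := by
    have h1 : Tendsto (fun χ' => (Q χ' 0).im) ↑U (𝓝 (h 0).im) :=
      (Complex.continuous_im.tendsto _).comp h0
    have h2 : Tendsto (fun χ' : Γ →* Circle => (Q χ' 0).im) ↑U (𝓝 0) := by
      have : (fun χ' : Γ →* Circle => (Q χ' 0).im) = fun _ => (0:ℝ) :=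
        funext fun χ' => (hQ χ').2.2.1
      rw [this]; exact tendsto_const_nhds
    exact tendsto_nhds_unique h1 h2
  have hre : y ≤ (h 0).re :=
    ge_of_tendsto ((Complex.continuous_re.tendsto _).comp h0) hUp
  have hypos : 0 < y := lt_trans (hrange χ).1 hy
  have hdiff : DifferentiableOn ℂ h (ball (0:ℂ) 1) :=
    limit_differentiableOn (fun χ' => Q χ') ↑U (fun χ' => (hQ χ').1.1)
      (fun χ' => (hQ χ').2.1) h (fun z hz => hh z hz)
  have hmax : (h 0).re ≤ (Q χ 0).re :=
    (hQ χ).2.2.2.2 h ⟨hdiff, ⟨1, hhb⟩, hhe⟩ hhb him (lt_of_lt_of_le hypos hre)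
  exact lt_irrefl _ (lt_of_le_of_lt hmax (lt_of_lt_of_le hy hre))
end

section
/- Let H be a Hilbert space of functions with reproducing kernel at a point ∞, i.e., there is K ∈ H with f(∞) = ⟨K, f⟩ for all f ∈ H, and K(∞) > 0. If f is a bounded function with ‖f‖_∞ ≤ 1 such that multiplication by f maps a reproducing kernel Hilbert space H_γ (kernel K^γ, K^γ(∞) > 0) contractively into another H_{γβ} (kernel K^{γβ}), then |f(∞)|² ≤ K^{γβ}(∞)/K^γ(∞). -/
open scoped ComplexInnerProductSpace

/-- abstract Lemma 5.2.  Let `H₁, H₂` be reproducing kernel Hilbert spaces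
(of functions) with reproducing kernels `K₁, K₂` for evaluation at the point `∞`, with
`K₁(∞) = ⟪K₁,K₁⟫ > 0`.  If multiplication by the bounded function `f` (with `‖f‖_∞ ≤ 1`)
maps `H₁` contractively into `H₂` and `f(∞) = fInf` in the sense that
`(f·g)(∞) = ⟪K₂, f·g⟫ = fInf · ⟪K₁, g⟫` for all `g ∈ H₁`, then
`|f(∞)|² ≤ K₂(∞)/K₁(∞)`. -/
theorem rkhs_eval_sq_le {H₁ H₂ : Type*} [NormedAddCommGroup H₁] [InnerProductSpace ℂ H₁]
    [NormedAddCommGroup H₂] [InnerProductSpace ℂ H₂]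
    (K₁ : H₁) (K₂ : H₂) (hK₁ : 0 < (⟪K₁, K₁⟫ : ℂ).re)
    (fInf : ℂ) (M : H₁ →ₗ[ℂ] H₂)
    (hcontr : ∀ g : H₁, ‖M g‖ ≤ ‖g‖)
    (heval : ∀ g : H₁, (⟪K₂, M g⟫ : ℂ) = fInf * ⟪K₁, g⟫) :
    ‖fInf‖ ^ 2 ≤ (⟪K₂, K₂⟫ : ℂ).re / (⟪K₁, K₁⟫ : ℂ).re := by
  have hre1 : (⟪K₁, K₁⟫ : ℂ).re = ‖K₁‖^2 := by
    exact inner_self_eq_norm_sq (𝕜 := ℂ) K₁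
  have hre2 : (⟪K₂, K₂⟫ : ℂ).re = ‖K₂‖^2 := by
    exact inner_self_eq_norm_sq (𝕜 := ℂ) K₂
  have hK1pos : (0:ℝ) < ‖K₁‖ := by
    have := hK₁; rw [hre1] at this; nlinarith [norm_nonneg K₁]
  have key : ‖fInf‖ * ‖K₁‖^2 ≤ ‖K₂‖ * ‖K₁‖ := by
    have h1 : ‖fInf * ⟪K₁, K₁⟫‖ ≤ ‖K₂‖ * ‖M K₁‖ := by
      rw [← heval K₁]
      exact norm_inner_le_norm K₂ (M K₁)
    have h2 : ‖fInf * ⟪K₁, K₁⟫‖ = ‖fInf‖ * ‖K₁‖^2 := by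
      rw [norm_mul]
      congr 1
      rw [← inner_self_re_eq_norm (𝕜 := ℂ) K₁]
      exact hre1
    calc ‖fInf‖ * ‖K₁‖^2 = ‖fInf * ⟪K₁, K₁⟫‖ := h2.symm
      _ ≤ ‖K₂‖ * ‖M K₁‖ := h1
      _ ≤ ‖K₂‖ * ‖K₁‖ := by
          apply mul_le_mul_of_nonneg_left (hcontr K₁) (norm_nonneg _)
  have key2 : ‖fInf‖ * ‖K₁‖ ≤ ‖K₂‖ := by
    have := key
    rw [pow_two, ← mul_assoc] at this
    exact le_of_mul_le_mul_right this hK1pos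
  rw [hre1, hre2, le_div_iff₀ (by positivity)]
  calc ‖fInf‖ ^ 2 * ‖K₁‖^2 = (‖fInf‖ * ‖K₁‖)^2 := by ring
    _ ≤ ‖K₂‖^2 := by
        apply sq_le_sq' _ key2
        nlinarith [norm_nonneg fInf, norm_nonneg K₁, norm_nonneg K₂]
end

section
/- Let U be a connected open subset of ℂ, z₀ ∈ U, V ⊆ U a connected open neighborhood of z₀, and f_n, f_∞ analytic functions on U, uniformly bounded, nowhere vanishing on V, with f_n(z₀) > 0 and f_∞(z₀) > 0, such that |f_n(z)| → |f_∞(z)| for all z ∈ V. Then f_n → f_∞ uniformly on compact subsets of U. -/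
open Filter Metric Set

/-- Uniformly bounded holomorphic functions on an open set are locally equi-Lipschitz,
by the Cauchy estimate for the derivative. -/
lemma auxLip {U : Set ℂ} (hU : IsOpen U) (C : ℝ) {x : ℂ} (hx : x ∈ U) :
    ∃ r L : ℝ, 0 < r ∧ 0 ≤ L ∧ closedBall x r ⊆ U ∧
      ∀ g : ℂ → ℂ, DifferentiableOn ℂ g U → (∀ z ∈ U, ‖g z‖ ≤ C) →
        ∀ y ∈ closedBall x r, ∀ y' ∈ closedBall x r, ‖g y - g y'‖ ≤ L * ‖y - y'‖ := by
  obtain ⟨R, hR0, hRU⟩ := Metric.nhds_basis_closedBall.mem_iff.1 (hU.mem_nhds hx)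
  set r : ℝ := R / 3 with hrdef
  have hr0 : 0 < r := by positivity
  set L : ℝ := max (C / (2 * r)) 0 with hLdef
  have hrU : closedBall x r ⊆ U :=
    (closedBall_subset_closedBall (by linarith)).trans hRU
  refine ⟨r, L, hr0, le_max_right _ _, hrU, ?_⟩
  intro g hg hgb
  have hsub : ∀ w ∈ closedBall x r, closedBall w (2 * r) ⊆ U := by
    intro w hw
    refine (closedBall_subset_closedBall' ?_).trans hRU
    have := mem_closedBall.1 hw
    linarith
  have hderiv : ∀ w ∈ closedBall x r, ‖deriv g w‖ ≤ L := by
    intro w hw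
    have h2r : (0:ℝ) < 2 * r := by positivity
    rw [← Complex.cderiv_eq_deriv hU hg h2r (hsub w hw)]
    refine le_trans (Complex.norm_cderiv_le h2r ?_) (le_max_left _ _)
    intro ζ hζ
    exact hgb ζ (hsub w hw (sphere_subset_closedBall hζ))
  intro y hy y' hy'
  exact Convex.norm_image_sub_le_of_norm_deriv_le
    (fun w hw => (hg w (hrU hw)).differentiableAt (hU.mem_nhds (hrU hw)))
    hderiv (convex_closedBall x r) hy' hy

/-- Pointwise convergence plus local equi-Lipschitz bounds give locally uniform convergence. -/
lemma auxTLU {U : Set ℂ} {F : ℕ → ℂ → ℂ} {g : ℂ → ℂ}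
    (hL : ∀ x ∈ U, ∃ r L : ℝ, 0 < r ∧ 0 ≤ L ∧ closedBall x r ⊆ U ∧
      ∀ n, ∀ y ∈ closedBall x r, ∀ y' ∈ closedBall x r, ‖F n y - F n y'‖ ≤ L * ‖y - y'‖)
    (hpt : ∀ z ∈ U, Tendsto (fun n => F n z) atTop (nhds (g z))) :
    TendstoLocallyUniformlyOn F g atTop U := by
  rw [Metric.tendstoLocallyUniformlyOn_iff]
  intro ε hε x hx
  obtain ⟨r, L, hr, hL0, hrU, hlip⟩ := hL x hx
  set δ : ℝ := min r (ε / 4 / (L + 1)) with hδdef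
  have hδ : 0 < δ := lt_min hr (by positivity)
  have hδr : δ ≤ r := min_le_left _ _
  have hballU : ball x δ ⊆ U := fun y hy =>
    hrU (closedBall_subset_closedBall hδr (ball_subset_closedBall hy))
  have hLd : ∀ y ∈ ball x δ, L * ‖y - x‖ ≤ ε / 4 := by
    intro y hy
    have h1 : ‖y - x‖ ≤ δ := le_of_lt (mem_ball_iff_norm.1 hy)
    have h2 : δ ≤ ε / 4 / (L + 1) := min_le_right _ _
    have h3 : L * ‖y - x‖ ≤ (L + 1) * (ε / 4 / (L + 1)) := by
      have := norm_nonneg (y - x)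
      nlinarith
    have h4 : (L + 1) * (ε / 4 / (L + 1)) = ε / 4 := by field_simp
    linarith
  refine ⟨ball x δ, mem_nhdsWithin_of_mem_nhds (ball_mem_nhds x hδ), ?_⟩
  have hconvx := Metric.tendsto_nhds.1 (hpt x hx) (ε / 4) (by positivity)
  filter_upwards [hconvx] with n hn
  intro y hy
  have hyU : y ∈ U := hballU hy
  have hyc : y ∈ closedBall x r := closedBall_subset_closedBall hδr (ball_subset_closedBall hy)
  have hxc : x ∈ closedBall x r := mem_closedBall_self hr.le
  -- dist (g y) (g x) ≤ L * ‖y - x‖ by passing the Lipschitz bound to the limit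
  have hgy : dist (g y) (g x) ≤ L * ‖y - x‖ := by
    refine le_of_tendsto ((hpt y hyU).dist (hpt x hx)) ?_
    filter_upwards with m
    rw [dist_eq_norm]
    exact hlip m y hyc x hxc
  have hFn : dist (F n x) (F n y) ≤ L * ‖y - x‖ := by
    rw [dist_eq_norm, ← norm_neg]
    simpa using hlip n y hyc x hxc
  have htri := dist_triangle4 (g y) (g x) (F n x) (F n y)
  have h1 := hLd y hy
  have h2 : dist (g x) (F n x) < ε / 4 := by rw [dist_comm]; exact hn
  linarith

/-- Montel-type extraction: a uniformly bounded sequence of holomorphic functions on an open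
set has a subsequence converging pointwise (hence locally uniformly) to a holomorphic limit. -/
lemma auxMontel {U : Set ℂ} (hU : IsOpen U) {F : ℕ → ℂ → ℂ} {C : ℝ}
    (hFd : ∀ n, DifferentiableOn ℂ (F n) U)
    (hFb : ∀ n, ∀ z ∈ U, ‖F n z‖ ≤ C) :
    ∃ ms : ℕ → ℕ, StrictMono ms ∧ ∃ g : ℂ → ℂ, DifferentiableOn ℂ g U ∧
      ∀ z ∈ U, Tendsto (fun k => F (ms k) z) atTop (nhds (g z)) := by
  -- a countable dense subset of U
  obtain ⟨s, hsc, hsd⟩ := TopologicalSpace.exists_countable_dense ↥U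
  set D : Set ℂ := Subtype.val '' s with hDdef
  have hDU : D ⊆ U := by rintro _ ⟨⟨d, hd⟩, -, rfl⟩; exact hd
  have hDc : D.Countable := hsc.image _
  have hDd : ∀ z ∈ U, ∀ δ : ℝ, 0 < δ → ∃ d ∈ D, dist z d < δ := by
    intro z hz δ hδ
    obtain ⟨⟨d, hd⟩, hds, hdist⟩ := hsd.exists_dist_lt (⟨z, hz⟩ : ↥U) hδ
    exact ⟨d, ⟨⟨d, hd⟩, hds, rfl⟩, by simpa [Subtype.dist_eq] using hdist⟩
  haveI : Countable ↥D := hDc.to_subtype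
  -- sequential compactness of pointwise values on D
  set K : Set (↥D → ℂ) := Set.pi univ (fun _ => closedBall (0:ℂ) C) with hKdef
  have hK : IsCompact K := isCompact_univ_pi fun _ => isCompact_closedBall _ _
  have hmem : ∀ n, (fun d : ↥D => F n d) ∈ K := by
    intro n
    rw [hKdef, Set.mem_univ_pi]
    intro d
    rw [mem_closedBall_zero_iff]
    exact hFb n d (hDU d.2)
  obtain ⟨l, -, ms, hms, hconv⟩ := hK.isSeqCompact hmem
  have hptD : ∀ d : ↥D, Tendsto (fun k => F (ms k) (d : ℂ)) atTop (nhds (l d)) := by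
    intro d
    exact tendsto_pi_nhds.1 hconv d
  -- Cauchy at every point of U
  have hcauchy : ∀ z ∈ U, ∃ w : ℂ, Tendsto (fun k => F (ms k) z) atTop (nhds w) := by
    intro z hz
    have hC : CauchySeq (fun k => F (ms k) z) := by
      rw [Metric.cauchySeq_iff]
      intro ε hε
      obtain ⟨r, L, hr, hL0, hrU, hlip⟩ := auxLip hU C hz
      set δ : ℝ := min r (ε / 4 / (L + 1)) with hδdef
      have hδ : 0 < δ := lt_min hr (by positivity)
      obtain ⟨d, hdD, hdz⟩ := hDd z hz δ hδ
      have hdc : d ∈ closedBall z r := by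
        rw [mem_closedBall, dist_comm]
        exact le_trans hdz.le (min_le_left _ _)
      have hzc : z ∈ closedBall z r := mem_closedBall_self hr.le
      have hlipd : ∀ k, dist (F (ms k) z) (F (ms k) d) ≤ ε / 4 := by
        intro k
        have h1 := hlip (F (ms k)) (hFd (ms k)) (hFb (ms k)) z hzc d hdc
        rw [dist_eq_norm]
        refine h1.trans ?_
        have h2 : ‖z - d‖ ≤ δ := by rw [← dist_eq_norm]; exact hdz.le
        have h3 : δ ≤ ε / 4 / (L + 1) := min_le_right _ _
        have h4 : L * ‖z - d‖ ≤ (L + 1) * (ε / 4 / (L + 1)) := by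
          have := norm_nonneg (z - d)
          nlinarith
        have h5 : (L + 1) * (ε / 4 / (L + 1)) = ε / 4 := by field_simp
        linarith
      have hcd : CauchySeq (fun k => F (ms k) d) := (hptD ⟨d, hdD⟩).cauchySeq
      obtain ⟨N, hN⟩ := Metric.cauchySeq_iff.1 hcd (ε / 4) (by positivity)
      refine ⟨N, fun m hm n hn => ?_⟩
      have htri := dist_triangle4 (F (ms m) z) (F (ms m) d) (F (ms n) d) (F (ms n) z)
      have h1 := hlipd m
      have h2 := hN m hm n hn
      have h3 : dist (F (ms n) d) (F (ms n) z) ≤ ε / 4 := by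
        rw [dist_comm]; exact hlipd n
      linarith
    exact cauchySeq_tendsto_of_complete hC
  choose! g hg using hcauchy
  have hTLU : TendstoLocallyUniformlyOn (fun k => F (ms k)) g atTop U := by
    refine auxTLU (fun x hx => ?_) hg
    obtain ⟨r, L, hr, hL0, hrU, hlip⟩ := auxLip hU C hx
    exact ⟨r, L, hr, hL0, hrU, fun n => hlip (F (ms n)) (hFd (ms n)) (hFb (ms n))⟩
  exact ⟨ms, hms, g,
    hTLU.differentiableOn (Eventually.of_forall fun k => hFd (ms k)) hU, hg⟩

/-- Proposition 4.2, planar version.  Let `U ⊆ ℂ` be a connected open set,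
`z₀ ∈ V ⊆ U` with `V` open and connected, and `f_n, fInf` analytic on `U`, uniformly bounded,
nonvanishing on `V`, positive at `z₀`, with `|f_n(z)| → |fInf(z)|` for all `z ∈ V`.  Then
`f_n → fInf` uniformly on compact subsets of `U`. -/
theorem tendstoLocallyUniformly_of_abs_tendsto
    (U V : Set ℂ) (hU : IsOpen U) (hUconn : IsConnected U)
    (hV : IsOpen V) (hVconn : IsConnected V) (hVU : V ⊆ U)
    (z₀ : ℂ) (hz₀ : z₀ ∈ V)
    (f : ℕ → ℂ → ℂ) (fInf : ℂ → ℂ)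
    (hfa : ∀ n, DifferentiableOn ℂ (f n) U) (hfInfa : DifferentiableOn ℂ fInf U)
    (C : ℝ) (hbd : ∀ n, ∀ z ∈ U, ‖f n z‖ ≤ C)
    (hbdInf : ∀ z ∈ U, ‖fInf z‖ ≤ C)
    (hnz : ∀ n, ∀ z ∈ V, f n z ≠ 0) (hnzInf : ∀ z ∈ V, fInf z ≠ 0)
    (hpos : ∀ n, (f n z₀).im = 0 ∧ 0 < (f n z₀).re)
    (hposInf : (fInf z₀).im = 0 ∧ 0 < (fInf z₀).re)
    (hmod : ∀ z ∈ V,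
      Tendsto (fun n => ‖f n z‖) atTop (nhds ‖fInf z‖)) :
    TendstoLocallyUniformlyOn f fInf atTop U := by
  -- a complex number with zero imaginary part and nonneg real part equals its absolute value
  have habsid : ∀ w : ℂ, w.im = 0 → 0 ≤ w.re → (‖w‖ : ℂ) = w := by
    intro w h1 h2
    have hw : w = ((w.re : ℝ) : ℂ) := Complex.ext rfl (by simp [h1])
    rw [hw, Complex.norm_real, Real.norm_of_nonneg h2]
  -- identification of subsequential limits
  have hident : ∀ σ : ℕ → ℕ, Tendsto σ atTop atTop → ∀ g : ℂ → ℂ,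
      DifferentiableOn ℂ g U →
      (∀ z ∈ U, Tendsto (fun k => f (σ k) z) atTop (nhds (g z))) → Set.EqOn g fInf U := by
    intro σ hσ g hgd hgc
    have habs : ∀ z ∈ V, ‖g z‖ = ‖fInf z‖ := by
      intro z hz
      refine tendsto_nhds_unique ?_ ((hmod z hz).comp hσ)
      exact (continuous_norm.tendsto _).comp (hgc z (hVU hz))
    have hgz₀ : g z₀ = fInf z₀ := by
      have him : (g z₀).im = 0 := by
        refine tendsto_nhds_unique ((Complex.continuous_im.tendsto _).comp (hgc z₀ (hVU hz₀))) ?_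
        have : (fun k => (f (σ k) z₀).im) = fun _ => (0:ℝ) := by
          funext k; exact (hpos (σ k)).1
        rw [Function.comp_def, this]
        exact tendsto_const_nhds
      have hre : 0 ≤ (g z₀).re := by
        refine ge_of_tendsto' ((Complex.continuous_re.tendsto _).comp (hgc z₀ (hVU hz₀))) ?_
        intro k
        exact (hpos (σ k)).2.le
      have h1 : (‖g z₀‖ : ℂ) = g z₀ := habsid _ him hre
      have h2 : (‖fInf z₀‖ : ℂ) = fInf z₀ := habsid _ hposInf.1 hposInf.2.le
      rw [← h1, ← h2, habs z₀ hz₀]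
    have hEqV : Set.EqOn g fInf V := by
      set h : ℂ → ℂ := fun z => g z / fInf z with hhdef
      have hhd : DifferentiableOn ℂ h V := (hgd.mono hVU).div (hfInfa.mono hVU) hnzInf
      have hone : ∀ z ∈ V, ‖h z‖ = 1 := by
        intro z hz
        rw [hhdef]
        simp only [norm_div, habs z hz]
        exact div_self (norm_ne_zero_iff.mpr (hnzInf z hz))
      have hmax : IsMaxOn (norm ∘ h) V z₀ := by
        intro z hz
        simp only [Function.comp_apply, hone z hz, hone z₀ hz₀,
          Set.mem_setOf_eq]
        exact le_refl 1
      have hconst := Complex.eqOn_of_isPreconnected_of_isMaxOn_norm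
        hVconn.isPreconnected hV hhd hz₀ hmax
      intro z hz
      have h1 : h z = h z₀ := hconst hz
      have h2 : h z₀ = 1 := by
        rw [hhdef]
        simp only [hgz₀]
        exact div_self (hnzInf z₀ hz₀)
      have h3 : g z / fInf z = 1 := by rw [← h2, ← h1]
      exact (div_eq_one_iff_eq (hnzInf z hz)).1 h3
    have hev : g =ᶠ[nhds z₀] fInf := Filter.eventuallyEq_of_mem (hV.mem_nhds hz₀) hEqV
    exact (hgd.analyticOnNhd hU).eqOn_of_preconnected_of_eventuallyEq
      (hfInfa.analyticOnNhd hU) hUconn.isPreconnected (hVU hz₀) hev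
  -- pointwise convergence on U
  have hpt : ∀ z ∈ U, Tendsto (fun n => f n z) atTop (nhds (fInf z)) := by
    intro z hz
    apply tendsto_of_subseq_tendsto
    intro ns hns
    obtain ⟨ms, hms, g, hgd, hgc⟩ := auxMontel hU (fun k => hfa (ns k)) (fun k => hbd (ns k))
    have hEq := hident (fun k => ns (ms k)) (hns.comp hms.tendsto_atTop) g hgd hgc
    refine ⟨ms, ?_⟩
    have := hgc z hz
    rwa [hEq hz] at this
  refine auxTLU (fun x hx => ?_) hpt
  obtain ⟨r, L, hr, hL0, hrU, hlip⟩ := auxLip hU C hx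
  exact ⟨r, L, hr, hL0, hrU, fun n => hlip (f n) (hfa n) (hbd n)⟩
end

section
/- Let G be a compact metrizable group, d a compatible metric, Q : G → (0,1] upper semicontinuous, and suppose {χ₀^m : m ∈ ℤ} is dense in G. If for every sequence of integers k_j with χ₀^{k_j} → 1 one has Q(χ₀^{k_j}) → 1, then for every sequence χ_j → 1 in G one has Q(χ_j) → 1. -/
open Filter

/-- diagonal argument of Lemma 3.6.  Let `G` be a compact metrizable
group, `Q : G → (0,1]` upper semicontinuous, and suppose the powers of `χ₀` are dense in
`G`.  If `Q(χ₀^{k_j}) → 1` along every sequence of integers with `χ₀^{k_j} → 1`, then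
`Q(χ_j) → 1` along every sequence `χ_j → 1` in `G`. -/
theorem continuity_at_one_from_orbit {G : Type*} [MetricSpace G] [Group G]
    [IsTopologicalGroup G] [CompactSpace G]
    (Q : G → ℝ) (hQ : ∀ g : G, Q g ∈ Set.Ioc (0 : ℝ) 1)
    (husc : UpperSemicontinuous Q)
    (χ₀ : G) (hdense : Dense (Set.range fun m : ℤ => χ₀ ^ m))
    (hpow : ∀ k : ℕ → ℤ, Tendsto (fun j => χ₀ ^ k j) atTop (nhds 1) →
      Tendsto (fun j => Q (χ₀ ^ k j)) atTop (nhds 1)) :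
    ∀ χ : ℕ → G, Tendsto χ atTop (nhds 1) →
      Tendsto (fun j => Q (χ j)) atTop (nhds 1) := by
  intro χ hχ
  -- choose m j
  have hsel : ∀ j : ℕ, ∃ m : ℤ, Q (χ₀ ^ m) < Q (χ j) + (1/2 : ℝ) ^ j ∧
      dist (χ₀ ^ m) (χ j) < (1/2 : ℝ) ^ j := by
    intro j
    have hpos : (0:ℝ) < (1/2 : ℝ) ^ j := by positivity
    have hopen : IsOpen ({g | Q g < Q (χ j) + (1/2 : ℝ) ^ j} ∩ Metric.ball (χ j) ((1/2:ℝ)^j)) :=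
      (husc.isOpen_preimage _).inter Metric.isOpen_ball
    have hne : (χ j) ∈ ({g | Q g < Q (χ j) + (1/2 : ℝ) ^ j} ∩ Metric.ball (χ j) ((1/2:ℝ)^j)) := by
      constructor
      · simpa using hpos
      · simpa using hpos
    obtain ⟨x, ⟨m, rfl⟩, hx⟩ := hdense.exists_mem_open hopen ⟨_, hne⟩
    exact ⟨m, hx.1, by simpa using hx.2⟩
  choose m hm1 hm2 using hsel
  have hhalf : Tendsto (fun j : ℕ => (1/2 : ℝ) ^ j) atTop (nhds 0) := by
    apply tendsto_pow_atTop_nhds_zero_of_lt_one <;> norm_num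
  -- χ₀ ^ m j → 1
  have htend : Tendsto (fun j => χ₀ ^ m j) atTop (nhds 1) := by
    rw [tendsto_iff_dist_tendsto_zero]
    have hle : ∀ j, dist (χ₀ ^ m j) 1 ≤ (1/2:ℝ)^j + dist (χ j) 1 :=
      fun j => (dist_triangle _ (χ j) 1).trans (by linarith [hm2 j])
    have h2 : Tendsto (fun j => (1/2:ℝ)^j + dist (χ j) 1) atTop (nhds 0) := by
      have := hhalf.add (tendsto_iff_dist_tendsto_zero.mp hχ)
      simpa using this
    exact squeeze_zero (fun j => dist_nonneg) hle h2
  have hQtend := hpow m htend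
  -- squeeze Q (χ j)
  have hlow : Tendsto (fun j => Q (χ₀ ^ m j) - (1/2:ℝ)^j) atTop (nhds 1) := by
    have := hQtend.sub hhalf
    simpa using this
  refine tendsto_of_tendsto_of_tendsto_of_le_of_le hlow tendsto_const_nhds
    (fun j => by linarith [hm1 j]) (fun j => (hQ (χ j)).2)
end
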